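/- Let g: ℝ → ℝ be defined by g(ℓ, u, τ) = σ((ℓ + log u − log(1−u))/τ) where σ is the sigmoid and u ∼ Unif(0,1). Then as a random variable, g(ℓ, U, τ) converges in distribution, as τ → 0⁺, to a Bernoulli random variable with success probability σ(ℓ); specifically, P(g(ℓ,U,τ) > 1/2) = σ(ℓ) for every τ > 0. -/

import Mathlib

open MeasureTheory Filter

/-- The sigmoid function `σ(x) = 1/(1+e^{−x})`. -/
noncomputable def sigmoid (x : ℝ) : ℝ := 1 / (1 + Real.exp (-x))

/-- The Binary Concrete relaxation `g(ℓ,u,τ) = σ((ℓ + log u − log(1−u))/τ)`. -/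
noncomputable def binaryConcrete (ℓ u τ : ℝ) : ℝ :=
  sigmoid ((ℓ + Real.log u - Real.log (1 - u)) / τ)


lemma sigmoid_pos (x : ℝ) : 0 < sigmoid x := by
  unfold sigmoid; positivity

lemma sigmoid_lt_one (x : ℝ) : sigmoid x < 1 := by
  unfold sigmoid
  rw [div_lt_one (by positivity)]
  have := Real.exp_pos (-x); linarith

lemma continuous_sigmoid' : Continuous sigmoid := by
  unfold sigmoid
  exact continuous_const.div
    (continuous_const.add (Real.continuous_exp.comp continuous_neg))
    (fun x => by positivity)

lemma half_lt_sigmoid_iff (x : ℝ) : 1 / 2 < sigmoid x ↔ 0 < x := by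
  unfold sigmoid
  have h : (0:ℝ) < 1 + Real.exp (-x) := by positivity
  rw [div_lt_div_iff₀ (by norm_num) h]
  rw [show (0:ℝ) < x ↔ -x < 0 by constructor <;> intro <;> linarith]
  rw [← Real.exp_lt_one_iff]
  constructor <;> intro <;> linarith

lemma one_sub_sigmoid (x : ℝ) :
    1 - sigmoid x = Real.exp (-x) / (1 + Real.exp (-x)) := by
  have h : (0:ℝ) < 1 + Real.exp (-x) := by positivity
  unfold sigmoid; field_simp; ring

lemma key_iff (ℓ u : ℝ) (h0 : 0 < u) (h1 : u < 1) :
    0 < ℓ + Real.log u - Real.log (1 - u) ↔ 1 - sigmoid ℓ < u := by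
  have h1u : (0:ℝ) < 1 - u := by linarith
  have hE : (0:ℝ) < Real.exp (-ℓ) := Real.exp_pos _
  have hden : (0:ℝ) < 1 + Real.exp (-ℓ) := by positivity
  rw [one_sub_sigmoid, div_lt_iff₀ hden]
  rw [show ℓ + Real.log u - Real.log (1 - u)
      = (Real.log u - Real.log (1 - u)) - (-ℓ) by ring]
  rw [sub_pos, ← Real.log_div h0.ne' h1u.ne',
    Real.lt_log_iff_exp_lt (div_pos h0 h1u), lt_div_iff₀ h1u]
  constructor <;> intro h <;> nlinarith

lemma key_lt (ℓ u : ℝ) (h0 : 0 < u) (h1 : u < 1) :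
    ℓ + Real.log u - Real.log (1 - u) < 0 ↔ u < 1 - sigmoid ℓ := by
  have h1u : (0:ℝ) < 1 - u := by linarith
  have hE : (0:ℝ) < Real.exp (-ℓ) := Real.exp_pos _
  have hden : (0:ℝ) < 1 + Real.exp (-ℓ) := by positivity
  rw [one_sub_sigmoid, lt_div_iff₀ hden]
  rw [show ℓ + Real.log u - Real.log (1 - u)
      = (Real.log u - Real.log (1 - u)) - (-ℓ) by ring]
  rw [sub_neg, ← Real.log_div h0.ne' h1u.ne',
    Real.log_lt_iff_lt_exp (div_pos h0 h1u), div_lt_iff₀ h1u]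
  constructor <;> intro h <;> nlinarith

lemma tendsto_sigmoid_atTop : Tendsto sigmoid atTop (nhds 1) := by
  have h : Tendsto (fun x : ℝ => Real.exp (-x)) atTop (nhds 0) :=
    Real.tendsto_exp_neg_atTop_nhds_zero
  have := ((tendsto_const_nhds (x := (1:ℝ))).div
    ((tendsto_const_nhds (x := (1:ℝ))).add h) (by norm_num))
  simp only [add_zero, div_one] at this
  exact this

lemma tendsto_sigmoid_atBot : Tendsto sigmoid atBot (nhds 0) := by
  have h : Tendsto (fun x : ℝ => Real.exp (-x)) atBot atTop :=
    Real.tendsto_exp_atTop.comp tendsto_neg_atBot_atTop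
  have h2 : Tendsto (fun x : ℝ => 1 + Real.exp (-x)) atBot atTop :=
    tendsto_atTop_add_const_left _ _ h
  have := h2.inv_tendsto_atTop
  unfold sigmoid
  simp only [one_div]
  exact this

/-- With `U ∼ Unif(0,1)`: for every `τ > 0`, `P(g(ℓ,U,τ) > 1/2) = σ(ℓ)`, and as
`τ → 0⁺` the random variable `g(ℓ,U,τ)` converges in distribution to a Bernoulli
random variable with success probability `σ(ℓ)` (on values `1` and `0`). -/
theorem binary_concrete_limit (ℓ : ℝ) :
    (∀ τ : ℝ, 0 < τ →
      ((volume.restrict (Set.Ioo (0 : ℝ) 1))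
          {u | 1 / 2 < binaryConcrete ℓ u τ}).toReal = sigmoid ℓ) ∧
      (∀ f : BoundedContinuousFunction ℝ ℝ,
        Tendsto (fun τ : ℝ => ∫ u, f (binaryConcrete ℓ u τ)
            ∂(volume.restrict (Set.Ioo (0 : ℝ) 1)))
          (nhdsWithin 0 (Set.Ioi 0))
          (nhds (sigmoid ℓ * f 1 + (1 - sigmoid ℓ) * f 0))) := by
  set s := sigmoid ℓ with hs
  have hs0 : 0 < s := sigmoid_pos ℓ
  have hs1 : s < 1 := sigmoid_lt_one ℓ
  set μ := volume.restrict (Set.Ioo (0 : ℝ) 1) with hμ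
  constructor
  · intro τ hτ
    have hset : {u | 1 / 2 < binaryConcrete ℓ u τ} ∩ Set.Ioo (0:ℝ) 1
        = Set.Ioo (1 - s) 1 := by
      ext u
      simp only [Set.mem_inter_iff, Set.mem_setOf_eq, Set.mem_Ioo]
      constructor
      · rintro ⟨hg, hu0, hu1⟩
        rw [binaryConcrete, half_lt_sigmoid_iff, lt_div_iff₀ hτ, zero_mul,
          key_iff ℓ u hu0 hu1] at hg
        exact ⟨hg, hu1⟩
      · rintro ⟨hu, hu1⟩
        have hu0 : 0 < u := by linarith
        refine ⟨?_, hu0, hu1⟩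
        rw [binaryConcrete, half_lt_sigmoid_iff, lt_div_iff₀ hτ, zero_mul,
          key_iff ℓ u hu0 hu1]
        exact hu
    rw [hμ, Measure.restrict_apply' measurableSet_Ioo, hset, Real.volume_Ioo]
    rw [show 1 - (1 - s) = s by ring, ENNReal.toReal_ofReal hs0.le]
  · intro f
    set F : ℝ → ℝ := fun u => if 1 - s < u then f 1 else f 0 with hF
    have hmeas : ∀ τ : ℝ, AEStronglyMeasurable
        (fun u => f (binaryConcrete ℓ u τ)) μ := by
      intro τ
      have hm : Measurable fun u : ℝ => (ℓ + Real.log u - Real.log (1 - u)) / τ :=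
        ((measurable_const.add Real.measurable_log).sub
          (Real.measurable_log.comp (measurable_const.sub measurable_id))).div_const τ
      exact ((f.continuous.comp continuous_sigmoid').measurable.comp hm).aestronglyMeasurable
    have hpt : ∀ u ∈ Set.Ioo (0:ℝ) 1, u ≠ 1 - s →
        Tendsto (fun τ : ℝ => binaryConcrete ℓ u τ) (nhdsWithin 0 (Set.Ioi 0))
          (nhds (if 1 - s < u then 1 else 0)) := by
      intro u hu hne
      obtain ⟨hu0, hu1⟩ := hu
      set L := ℓ + Real.log u - Real.log (1 - u) with hL
      have hinv : Tendsto (fun τ : ℝ => τ⁻¹) (nhdsWithin 0 (Set.Ioi 0)) atTop :=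
        tendsto_inv_nhdsGT_zero
      rcases lt_or_gt_of_ne hne with h | h
      · have hLneg : L < 0 := by rw [hL, key_lt ℓ u hu0 hu1]; exact h
        rw [if_neg (by linarith)]
        have harg : Tendsto (fun τ : ℝ => L / τ) (nhdsWithin 0 (Set.Ioi 0)) atBot := by
          simp only [div_eq_mul_inv]
          exact (tendsto_const_mul_atBot_of_neg hLneg).mpr hinv
        exact tendsto_sigmoid_atBot.comp harg
      · have hLpos : 0 < L := by rw [hL, key_iff ℓ u hu0 hu1]; exact h
        rw [if_pos h]
        have harg : Tendsto (fun τ : ℝ => L / τ) (nhdsWithin 0 (Set.Ioi 0)) atTop := by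
          simp only [div_eq_mul_inv]
          exact (tendsto_const_mul_atTop_of_pos hLpos).mpr hinv
        exact tendsto_sigmoid_atTop.comp harg
    have hae : ∀ᵐ u ∂μ, Tendsto (fun τ : ℝ => f (binaryConcrete ℓ u τ))
        (nhdsWithin 0 (Set.Ioi 0)) (nhds (F u)) := by
      have h1 : ∀ᵐ u ∂μ, u ∈ Set.Ioo (0:ℝ) 1 :=
        ae_restrict_mem measurableSet_Ioo
      have h2 : ∀ᵐ u ∂μ, u ≠ 1 - s := by
        refine ae_restrict_of_ae ?_
        have hone : {a : ℝ | ¬ a ≠ 1 - s} = {1 - s} := by ext a; simp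
        rw [ae_iff, hone]
        exact measure_singleton _
      filter_upwards [h1, h2] with u hu hne
      have := (f.continuous.tendsto _).comp (hpt u hu hne)
      rw [apply_ite f] at this
      exact this
    have hDCT := MeasureTheory.tendsto_integral_filter_of_dominated_convergence
      (μ := μ) (F := fun τ u => f (binaryConcrete ℓ u τ)) (f := F)
      (bound := fun _ => ‖f‖)
      (Eventually.of_forall hmeas)
      (Eventually.of_forall fun τ => Eventually.of_forall fun u =>
        f.norm_coe_le_norm _)
      (integrable_const _)
      hae
    have hFeq : ∀ u : ℝ, F u
        = Set.indicator (Set.Ioi (1 - s)) (fun _ => f 1 - f 0) u + f 0 := by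
      intro u
      by_cases h : 1 - s < u
      · simp only [hF, if_pos h, Set.indicator_of_mem (Set.mem_Ioi.mpr h)]; ring
      · simp only [hF, if_neg h,
          Set.indicator_of_notMem (by simpa using h : u ∉ Set.Ioi (1 - s))]
        ring
    have hμuniv : (μ Set.univ).toReal = 1 := by
      rw [hμ, Measure.restrict_apply_univ, Real.volume_Ioo]
      norm_num
    have hμIoi : (μ (Set.Ioi (1 - s))).toReal = s := by
      rw [hμ, Measure.restrict_apply' measurableSet_Ioo]
      have : Set.Ioi (1 - s) ∩ Set.Ioo (0:ℝ) 1 = Set.Ioo (1 - s) 1 := by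
        ext u
        simp only [Set.mem_inter_iff, Set.mem_Ioi, Set.mem_Ioo]
        constructor
        · rintro ⟨h, _, h1⟩; exact ⟨h, h1⟩
        · rintro ⟨h, h1⟩; exact ⟨h, by linarith, h1⟩
      rw [this, Real.volume_Ioo, show 1 - (1 - s) = s by ring,
        ENNReal.toReal_ofReal hs0.le]
    have hint : ∫ u, F u ∂μ = s * f 1 + (1 - s) * f 0 := by
      rw [integral_congr_ae (Eventually.of_forall hFeq)]
      have hind : Integrable (Set.indicator (Set.Ioi (1 - s))
          (fun _ => f 1 - f 0) : ℝ → ℝ) μ :=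
        (integrable_const _).indicator measurableSet_Ioi
      rw [integral_add hind (integrable_const _),
        integral_indicator_const _ measurableSet_Ioi, integral_const,
        measureReal_def, measureReal_def, hμuniv, hμIoi]
      simp only [smul_eq_mul, one_mul]
      ring
    rw [show sigmoid ℓ * f 1 + (1 - sigmoid ℓ) * f 0 = ∫ u, F u ∂μ by
      rw [hint, hs]]
    exact hDCT
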